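/- Let F and G be separable Banach spaces, μ a Borel probability measure on F, Φ : F × G → ℝ jointly measurable, and D_μ ⊆ G. Assume (WD1) for every y ∈ D_μ the function u ↦ exp(−Φ(u,y)) is μ-integrable; (WD2) Φ is bounded on bounded subsets of F × G; (WP1) the map y ↦ Z_y = ∫_F exp(−Φ(u,y)) μ(du) is continuous on D_μ in the relative topology; and (WP2) for every u ∈ F the map y ↦ Φ(u,y) is continuous on G. Then the posterior distribution is well-posed on D_μ in the weak topology: for every sequence y_k → y with y_k, y ∈ D_μ and every bounded continuous function f : F → ℝ, ∫_F f dμ^{y_k} → ∫_F f dμ^y. -/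

import Mathlib

open MeasureTheory Filter
open scoped ENNReal NNReal

/-- The posterior distribution `μ^y ∝ exp(−Φ(u,y)) μ(du)`:
the normalized measure with density `exp(−Φ(·,y))` with respect to the prior `μ`. -/
noncomputable def posteriorMeasure {F G : Type*} [MeasurableSpace F]
    (μ : Measure F) (Φ : F × G → ℝ) (y : G) : Measure F :=
  (∫⁻ u, ENNReal.ofReal (Real.exp (-Φ (u, y))) ∂μ)⁻¹ •
    μ.withDensity (fun u => ENNReal.ofReal (Real.exp (-Φ (u, y))))

/-- Under (WD1), (WD2), (WP1) (continuity of the normalizing constants on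
`D_μ`) and (WP2) (continuity of `y ↦ Φ(u,y)` for each `u`), the posterior distribution is
well-posed on `D_μ` in the weak topology: for every sequence `y_k → y` in `D_μ` and every
bounded continuous `f : F → ℝ`, `∫ f dμ^{y_k} → ∫ f dμ^y`. -/
theorem posterior_well_posed_weak
    {F G : Type*}
    [NormedAddCommGroup F] [NormedSpace ℝ F] [CompleteSpace F]
    [TopologicalSpace.SeparableSpace F] [MeasurableSpace F] [BorelSpace F]
    [NormedAddCommGroup G] [NormedSpace ℝ G] [CompleteSpace G]
    [TopologicalSpace.SeparableSpace G] [MeasurableSpace G] [BorelSpace G]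
    (μ : Measure F) [IsProbabilityMeasure μ]
    (Φ : F × G → ℝ) (hΦmeas : Measurable Φ)
    (D : Set G)
    (hWD1 : ∀ y ∈ D, Integrable (fun u => Real.exp (-Φ (u, y))) μ)
    (hWD2 : ∀ S : Set (F × G), Bornology.IsBounded S → ∃ C : ℝ, ∀ z ∈ S, |Φ z| ≤ C)
    (hWP1 : ContinuousOn (fun y => ∫ u, Real.exp (-Φ (u, y)) ∂μ) D)
    (hWP2 : ∀ u : F, Continuous (fun y => Φ (u, y))) :
    ∀ (ys : ℕ → G) (y : G), (∀ k, ys k ∈ D) → y ∈ D → Tendsto ys atTop (nhds y) →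
      ∀ f : F → ℝ, Continuous f → (∃ C : ℝ, ∀ u, |f u| ≤ C) →
        Tendsto (fun k => ∫ u, f u ∂(posteriorMeasure μ Φ (ys k))) atTop
          (nhds (∫ u, f u ∂(posteriorMeasure μ Φ y))) := by
  intro ys y hys hy hlim f hfc hfb
  obtain ⟨C, hC⟩ := hfb
  set C' : ℝ := max C 0 with hC'def
  have hC' : ∀ u, |f u| ≤ C' := fun u => (hC u).trans (le_max_left _ _)
  have hC'0 : 0 ≤ C' := le_max_right _ _
  set Z : G → ℝ := fun y' => ∫ u, Real.exp (-Φ (u, y')) ∂μ with hZdef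
  -- measurability of the densities
  have hmeas : ∀ y' : G, Measurable fun u => Real.exp (-Φ (u, y')) := fun y' =>
    Real.measurable_exp.comp ((hΦmeas.comp (measurable_id.prodMk measurable_const)).neg)
  -- positivity of the normalizing constants
  have hZpos : ∀ y' ∈ D, 0 < Z y' := by
    intro y' hy'
    refine (integral_pos_iff_support_of_nonneg (fun u => (Real.exp_nonneg _))
      (hWD1 y' hy')).mpr ?_
    have hsupp : Function.support (fun u => Real.exp (-Φ (u, y'))) = Set.univ := by
      ext u; simp [Function.mem_support, Real.exp_ne_zero]
    rw [hsupp]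
    simp
  -- representation of the posterior integral
  have key : ∀ y' ∈ D, ∫ u, f u ∂(posteriorMeasure μ Φ y')
      = (Z y')⁻¹ * ∫ u, Real.exp (-Φ (u, y')) * f u ∂μ := by
    intro y' hy'
    unfold posteriorMeasure
    rw [integral_smul_measure]
    have h1 : (∫⁻ u, ENNReal.ofReal (Real.exp (-Φ (u, y'))) ∂μ) = ENNReal.ofReal (Z y') := by
      rw [← ofReal_integral_eq_lintegral_ofReal (hWD1 y' hy')
        (Filter.Eventually.of_forall fun u => Real.exp_nonneg _)]
    rw [h1]
    have h2 : ((ENNReal.ofReal (Z y'))⁻¹).toReal = (Z y')⁻¹ := by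
      rw [ENNReal.toReal_inv, ENNReal.toReal_ofReal (hZpos y' hy').le]
    have h3 : (μ.withDensity fun u => ENNReal.ofReal (Real.exp (-Φ (u, y'))))
        = μ.withDensity fun u => ((Real.exp (-Φ (u, y'))).toNNReal : ℝ≥0∞) := rfl
    rw [h2, h3, integral_withDensity_eq_integral_smul ((hmeas y').real_toNNReal) f]
    simp only [smul_eq_mul, NNReal.smul_def]
    congr 1
    refine integral_congr_ae (Filter.Eventually.of_forall fun u => ?_)
    simp [Real.coe_toNNReal _ (Real.exp_nonneg _)]
  -- convergence of normalizing constants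
  have hZ : Tendsto (fun k => Z (ys k)) atTop (nhds (Z y)) := by
    have h1 : Tendsto ys atTop (nhdsWithin y D) :=
      tendsto_nhdsWithin_iff.mpr ⟨hlim, Filter.Eventually.of_forall hys⟩
    exact (hWP1 y hy).tendsto.comp h1
  -- pointwise convergence of the densities
  have hpt : ∀ u : F, Tendsto (fun k => Real.exp (-Φ (u, ys k))) atTop
      (nhds (Real.exp (-Φ (u, y)))) := fun u =>
    ((Real.continuous_exp.comp (hWP2 u).neg).tendsto y).comp hlim
  -- L¹ convergence of the densities (Scheffé)
  set h : ℕ → F → ℝ := fun k u => max (Real.exp (-Φ (u, y)) - Real.exp (-Φ (u, ys k))) 0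
    with hhdef
  have hhint : ∀ k, Integrable (h k) μ := fun k =>
    ((hWD1 y hy).sub (hWD1 (ys k) (hys k))).pos_part
  have hDCT : Tendsto (fun k => ∫ u, h k u ∂μ) atTop (nhds 0) := by
    have h0 : (0 : ℝ) = ∫ _u, (0 : ℝ) ∂μ := by simp
    rw [h0]
    refine tendsto_integral_of_dominated_convergence (fun u => Real.exp (-Φ (u, y)))
      (fun k => (((hmeas y).sub (hmeas (ys k))).max measurable_const).aestronglyMeasurable)
      (hWD1 y hy) (fun k => Filter.Eventually.of_forall fun u => ?_)
      (Filter.Eventually.of_forall fun u => ?_)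
    · rw [Real.norm_eq_abs, abs_of_nonneg (le_max_right _ _)]
      exact max_le (sub_le_self _ (Real.exp_nonneg _)) (Real.exp_nonneg _)
    · have := ((tendsto_const_nhds (x := Real.exp (-Φ (u, y)))).sub (hpt u)).max
        (tendsto_const_nhds (x := (0 : ℝ)))
      simpa using this
  have hL1 : Tendsto (fun k => ∫ u, |Real.exp (-Φ (u, ys k)) - Real.exp (-Φ (u, y))| ∂μ)
      atTop (nhds 0) := by
    have habs : ∀ k, (fun u => |Real.exp (-Φ (u, ys k)) - Real.exp (-Φ (u, y))|)
        = fun u => (Real.exp (-Φ (u, ys k)) - Real.exp (-Φ (u, y))) + 2 * h k u := by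
      intro k
      funext u
      set a := Real.exp (-Φ (u, ys k))
      set b := Real.exp (-Φ (u, y))
      rcases le_total b a with hba | hab
      · rw [abs_of_nonneg (sub_nonneg.mpr hba), hhdef]
        change a - b = a - b + 2 * max (b - a) 0
        simp only [max_eq_right (sub_nonpos.mpr hba)]
        ring
      · rw [abs_of_nonpos (sub_nonpos.mpr hab), hhdef]
        change -(a - b) = a - b + 2 * max (b - a) 0
        simp only [max_eq_left (sub_nonneg.mpr hab)]
        ring
    have heq : ∀ k, ∫ u, |Real.exp (-Φ (u, ys k)) - Real.exp (-Φ (u, y))| ∂μ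
        = (Z (ys k) - Z y) + 2 * ∫ u, h k u ∂μ := by
      intro k
      have hsub : Integrable (fun u => Real.exp (-Φ (u, ys k)) - Real.exp (-Φ (u, y))) μ :=
        (hWD1 (ys k) (hys k)).sub (hWD1 y hy)
      rw [habs k, integral_add hsub ((hhint k).const_mul 2),
        integral_sub (hWD1 (ys k) (hys k)) (hWD1 y hy), integral_const_mul]
    simp only [heq]
    have := (hZ.sub (tendsto_const_nhds (x := Z y))).add
      ((tendsto_const_nhds (x := (2 : ℝ))).mul hDCT)
    simpa using this
  -- convergence of numerators
  have hint : ∀ y' ∈ D, Integrable (fun u => Real.exp (-Φ (u, y')) * f u) μ := by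
    intro y' hy'
    have := (hWD1 y' hy').bdd_mul hfc.aestronglyMeasurable
      (Filter.Eventually.of_forall fun u => by rw [Real.norm_eq_abs]; exact hC' u)
    simpa [mul_comm] using this
  have hNum : Tendsto (fun k => ∫ u, Real.exp (-Φ (u, ys k)) * f u ∂μ) atTop
      (nhds (∫ u, Real.exp (-Φ (u, y)) * f u ∂μ)) := by
    rw [tendsto_iff_norm_sub_tendsto_zero]
    refine squeeze_zero (fun k => norm_nonneg _)
      (g := fun k => C' * ∫ u, |Real.exp (-Φ (u, ys k)) - Real.exp (-Φ (u, y))| ∂μ)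
      (fun k => ?_) ?_
    · rw [← integral_sub (hint (ys k) (hys k)) (hint y hy)]
      calc ‖∫ u, (Real.exp (-Φ (u, ys k)) * f u - Real.exp (-Φ (u, y)) * f u) ∂μ‖
          ≤ ∫ u, ‖Real.exp (-Φ (u, ys k)) * f u - Real.exp (-Φ (u, y)) * f u‖ ∂μ :=
            norm_integral_le_integral_norm _
        _ ≤ ∫ u, C' * |Real.exp (-Φ (u, ys k)) - Real.exp (-Φ (u, y))| ∂μ := by
            refine integral_mono_of_nonneg
              (Filter.Eventually.of_forall fun u => norm_nonneg _)
              (((hWD1 (ys k) (hys k)).sub (hWD1 y hy)).abs.const_mul C')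
              (Filter.Eventually.of_forall fun u => ?_)
            simp only
            rw [Real.norm_eq_abs, ← sub_mul, abs_mul, mul_comm]
            exact mul_le_mul_of_nonneg_right (hC' u) (abs_nonneg _)
        _ = C' * ∫ u, |Real.exp (-Φ (u, ys k)) - Real.exp (-Φ (u, y))| ∂μ := by
            rw [integral_const_mul]
    · have := (tendsto_const_nhds (x := C')).mul hL1
      simpa using this
  -- conclude
  have heq2 : (fun k => ∫ u, f u ∂(posteriorMeasure μ Φ (ys k)))
      = fun k => (Z (ys k))⁻¹ * ∫ u, Real.exp (-Φ (u, ys k)) * f u ∂μ :=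
    funext fun k => key (ys k) (hys k)
  rw [heq2, key y hy]
  exact (hZ.inv₀ (hZpos y hy).ne').mul hNum
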